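/- Under the same setup, the commutator of time-differentiation and weighted averaging satisfies | d/dR ⟨f⟩ − ⟨f_R⟩ | ≤ (πK²/R³) ⟨|f|⟩ ‖(e^{2η})_θ‖_{L¹(S¹)}. -/

import Mathlib

open Real MeasureTheory intervalIntegral

open Real MeasureTheory intervalIntegral Metric

noncomputable def pd (G : ℝ → ℝ → ℝ) (r θ : ℝ) : ℝ :=
  fderiv ℝ (fun p : ℝ × ℝ => G p.1 p.2) (r, θ) (1, 0)

lemma hasDerivAt_pd {G : ℝ → ℝ → ℝ}
    (hG : ContDiff ℝ (⊤ : ℕ∞) (fun p : ℝ × ℝ => G p.1 p.2)) (r θ : ℝ) :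
    HasDerivAt (fun r => G r θ) (pd G r θ) r := by
  have h1 := (hG.differentiable (by simp) (r, θ)).hasFDerivAt
  have h2 := hasFDerivAt_prodMk_left (𝕜 := ℝ) r θ
  have h3 := (h1.comp r h2).hasDerivAt
  simpa [pd, Function.comp_def] using h3

lemma continuous_pd {G : ℝ → ℝ → ℝ}
    (hG : ContDiff ℝ (⊤ : ℕ∞) (fun p : ℝ × ℝ => G p.1 p.2)) :
    Continuous (fun p : ℝ × ℝ => pd G p.1 p.2) := by
  have := (hG.continuous_fderiv (by simp))
  exact this.clm_apply continuous_const

lemma continuous_G {G : ℝ → ℝ → ℝ}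
    (hG : ContDiff ℝ (⊤ : ℕ∞) (fun p : ℝ × ℝ => G p.1 p.2)) :
    Continuous (fun p : ℝ × ℝ => G p.1 p.2) := hG.continuous

lemma hasDerivAt_intInt {G : ℝ → ℝ → ℝ}
    (hG : ContDiff ℝ (⊤ : ℕ∞) (fun p : ℝ × ℝ => G p.1 p.2)) (R : ℝ) :
    HasDerivAt (fun r => ∫ θ in (0:ℝ)..(2 * π), G r θ)
      (∫ θ in (0:ℝ)..(2 * π), pd G R θ) R := by
  have hcpd := continuous_pd hG
  obtain ⟨C, hC⟩ := ((isCompact_closedBall R 1).prod (isCompact_uIcc (a := (0:ℝ))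
      (b := 2 * π))).exists_bound_of_continuousOn hcpd.continuousOn
  have main := intervalIntegral.hasDerivAt_integral_of_dominated_loc_of_deriv_le
    (F := G) (F' := pd G) (x₀ := R) (a := (0:ℝ)) (b := 2 * π) (bound := fun _ => C)
    (ball_mem_nhds R one_pos)
    (Filter.Eventually.of_forall fun x =>
      (hG.continuous.comp (continuous_const.prodMk continuous_id)).aestronglyMeasurable)
    ((hG.continuous.comp (continuous_const.prodMk continuous_id)).intervalIntegrable _ _)
    ((hcpd.comp (continuous_const.prodMk continuous_id)).aestronglyMeasurable)
    (Filter.Eventually.of_forall fun t ht x hx => by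
      have : (x, t) ∈ closedBall R 1 ×ˢ Set.uIcc (0:ℝ) (2 * π) :=
        ⟨ball_subset_closedBall hx, Set.uIoc_subset_uIcc ht⟩
      simpa using hC (x, t) this)
    (intervalIntegrable_const (μ := volume))
    (Filter.Eventually.of_forall fun t _ x _ => hasDerivAt_pd hG x t)
  exact main.2

lemma osc_bound {E : ℝ → ℝ} (hE : ContDiff ℝ (⊤ : ℕ∞) E) {c d s θ : ℝ}
    (hs : s ∈ Set.Icc c d) (hθ : θ ∈ Set.Icc c d) :
    |E θ - E s| ≤ ∫ t in c..d, |deriv E t| := by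
  have hdiff : ∀ x, DifferentiableAt ℝ E x := fun x =>
    hE.differentiable (by simp) x
  have hcd : Continuous (deriv E) :=
    hE.continuous_deriv (by exact_mod_cast (le_top : (1:ℕ∞) ≤ ⊤))
  have key : ∀ u v : ℝ, u ∈ Set.Icc c d → v ∈ Set.Icc c d → u ≤ v →
      |E v - E u| ≤ ∫ t in c..d, |deriv E t| := by
    intro u v hu hv huv
    have h1 : ∫ t in u..v, deriv E t = E v - E u :=
      intervalIntegral.integral_deriv_eq_sub (fun x _ => hdiff x) (hcd.intervalIntegrable u v)
    rw [← h1]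
    calc |∫ t in u..v, deriv E t| ≤ ∫ t in u..v, |deriv E t| :=
          intervalIntegral.abs_integral_le_integral_abs huv
      _ ≤ ∫ t in c..d, |deriv E t| :=
          intervalIntegral.integral_mono_interval hu.1 huv hv.2
            (Filter.Eventually.of_forall fun x => abs_nonneg _)
            (hcd.abs.intervalIntegrable c d)
  rcases le_total s θ with h | h
  · exact key s θ hs hθ h
  · rw [abs_sub_comm]; exact key θ s hθ hs h



set_option maxHeartbeats 1000000 in
/-- Commutator estimate between time-differentiation and the weighted average
`⟨f⟩ = P⁻¹ ∫_{S¹} f a⁻¹ dθ`: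
`| d/dR ⟨f⟩ − ⟨f_R⟩ | ≤ (πK²/R³) ⟨|f|⟩ ‖(e^{2η})_θ‖_{L¹(S¹)}`. -/
theorem commutator_estimate
    (K R₀ : ℝ) (hR₀ : 0 < R₀)
    (a η f : ℝ → ℝ → ℝ)
    (ha : ContDiff ℝ (⊤ : ℕ∞) (fun p : ℝ × ℝ => a p.1 p.2))
    (hη : ContDiff ℝ (⊤ : ℕ∞) (fun p : ℝ × ℝ => η p.1 p.2))
    (hf : ContDiff ℝ (⊤ : ℕ∞) (fun p : ℝ × ℝ => f p.1 p.2))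
    (hapos : ∀ R θ, 0 < a R θ)
    (haper : ∀ R, Function.Periodic (a R) (2 * π))
    (hηper : ∀ R, Function.Periodic (η R) (2 * π))
    (hfper : ∀ R, Function.Periodic (f R) (2 * π))
    (haeq : ∀ R ∈ Set.Ici R₀, ∀ θ,
      deriv (fun r => 2 * Real.log (a r θ)) R = -(K ^ 2 / R ^ 3) * Real.exp (2 * η R θ))
    (P : ℝ → ℝ) (hPdef : ∀ R, P R = ∫ θ in (0:ℝ)..(2 * π), (a R θ)⁻¹)
    (R : ℝ) (hR : R ∈ Set.Ici R₀) :
    |deriv (fun r => (P r)⁻¹ * ∫ θ in (0:ℝ)..(2 * π), f r θ * (a r θ)⁻¹) R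
        - (P R)⁻¹ * ∫ θ in (0:ℝ)..(2 * π), deriv (fun r => f r θ) R * (a R θ)⁻¹|
      ≤ π * K ^ 2 / R ^ 3 *
          ((P R)⁻¹ * ∫ θ in (0:ℝ)..(2 * π), |f R θ| * (a R θ)⁻¹) *
          ∫ θ in (0:ℝ)..(2 * π), |deriv (fun t => Real.exp (2 * η R t)) θ| := by
  have hRpos : 0 < R := lt_of_lt_of_le hR₀ hR
  have hR3 : 0 < R ^ 3 := by positivity
  have h2π : (0:ℝ) < 2 * π := by positivity
  have hane : ∀ r θ, a r θ ≠ 0 := fun r θ => (hapos r θ).ne'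
  set c : ℝ := K ^ 2 / (2 * R ^ 3) with hc
  have hc0 : 0 ≤ c := by positivity
  -- smoothness of auxiliary functions
  have hb : ContDiff ℝ (⊤ : ℕ∞) (fun p : ℝ × ℝ => (a p.1 p.2)⁻¹) :=
    ha.inv (fun p => hane p.1 p.2)
  have hg : ContDiff ℝ (⊤ : ℕ∞) (fun p : ℝ × ℝ => f p.1 p.2 * (a p.1 p.2)⁻¹) := hf.mul hb
  have hEc : ContDiff ℝ (⊤ : ℕ∞) (fun θ : ℝ => Real.exp (2 * η R θ)) := by
    have h1 : ContDiff ℝ (⊤ : ℕ∞) (fun θ : ℝ => η R θ) :=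
      hη.comp (contDiff_const.prodMk contDiff_id)
    exact Real.contDiff_exp.comp (contDiff_const.mul h1)
  -- continuity of slices
  have cw : Continuous (fun θ => (a R θ)⁻¹) :=
    hb.continuous.comp (continuous_const.prodMk continuous_id)
  have cF : Continuous (fun θ => f R θ) :=
    hf.continuous.comp (continuous_const.prodMk continuous_id)
  have cE : Continuous (fun θ => Real.exp (2 * η R θ)) := hEc.continuous
  have cFr : Continuous (fun θ => deriv (fun r => f r θ) R) := by
    have h1 : (fun θ => deriv (fun r => f r θ) R) = fun θ => pd f R θ :=
      funext fun θ => (hasDerivAt_pd hf R θ).deriv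
    rw [h1]
    exact (continuous_pd hf).comp (continuous_const.prodMk continuous_id)
  have hw0 : ∀ θ, 0 ≤ (a R θ)⁻¹ := fun θ => (inv_pos.2 (hapos R θ)).le
  -- positivity of P
  have hP0 : 0 < P R := by
    rw [hPdef]
    exact intervalIntegral.intervalIntegral_pos_of_pos (cw.intervalIntegrable _ _)
      (fun x => inv_pos.2 (hapos R x)) h2π
  have hPne : P R ≠ 0 := hP0.ne'
  -- value of the partial derivative of a⁻¹
  have hpdb : ∀ θ, pd (fun r θ => (a r θ)⁻¹) R θ
      = c * (Real.exp (2 * η R θ) * (a R θ)⁻¹) := by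
    intro θ
    have hA := hasDerivAt_pd ha R θ
    have hlog : HasDerivAt (fun r => 2 * Real.log (a r θ)) (2 * (pd a R θ / a R θ)) R :=
      (hA.log (hane R θ)).const_mul 2
    have h1 : 2 * (pd a R θ / a R θ) = -(K ^ 2 / R ^ 3) * Real.exp (2 * η R θ) := by
      rw [← hlog.deriv]; exact haeq R hR θ
    have hinv : HasDerivAt (fun r => (a r θ)⁻¹) (-(pd a R θ) / (a R θ) ^ 2) R :=
      hA.inv (hane R θ)
    have h2 := (hasDerivAt_pd (G := fun r θ => (a r θ)⁻¹) hb R θ).unique hinv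
    rw [h2, hc]
    have hu := hane R θ
    have hRne : R ≠ 0 := hRpos.ne'
    have hA2 : pd a R θ = -(K ^ 2 / R ^ 3) * Real.exp (2 * η R θ) * a R θ / 2 := by
      field_simp at h1 ⊢
      linarith [h1]
    rw [hA2]
    field_simp
  -- derivative of P
  set S : ℝ := ∫ θ in (0:ℝ)..(2 * π), Real.exp (2 * η R θ) * (a R θ)⁻¹ with hS
  have hPder : HasDerivAt P (c * S) R := by
    have h := hasDerivAt_intInt (G := fun r θ => (a r θ)⁻¹) hb R
    have hfun : P = fun r => ∫ θ in (0:ℝ)..(2 * π), (a r θ)⁻¹ := funext hPdef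
    rw [hfun]
    have : (∫ θ in (0:ℝ)..(2 * π), pd (fun r θ => (a r θ)⁻¹) R θ) = c * S := by
      rw [hS, ← intervalIntegral.integral_const_mul]
      exact intervalIntegral.integral_congr fun θ _ => hpdb θ
    rwa [this] at h
  -- derivative of the numerator integral
  set Q : ℝ := ∫ θ in (0:ℝ)..(2 * π), f R θ * (Real.exp (2 * η R θ) * (a R θ)⁻¹) with hQ
  set FrI : ℝ := ∫ θ in (0:ℝ)..(2 * π), deriv (fun r => f r θ) R * (a R θ)⁻¹ with hFrI
  have hIder : HasDerivAt (fun r => ∫ θ in (0:ℝ)..(2 * π), f r θ * (a r θ)⁻¹)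
      (FrI + c * Q) R := by
    have h := hasDerivAt_intInt (G := fun r θ => f r θ * (a r θ)⁻¹) hg R
    have heq : (∫ θ in (0:ℝ)..(2 * π), pd (fun r θ => f r θ * (a r θ)⁻¹) R θ)
        = FrI + c * Q := by
      rw [hFrI, hQ, ← intervalIntegral.integral_const_mul,
        ← intervalIntegral.integral_add ((cFr.fun_mul cw).intervalIntegrable _ _)
          ((continuous_const.fun_mul (cF.fun_mul (cE.fun_mul cw))).intervalIntegrable _ _)]
      refine intervalIntegral.integral_congr fun θ _ => ?_
      have hbθ : HasDerivAt (fun r => (a r θ)⁻¹)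
          (c * (Real.exp (2 * η R θ) * (a R θ)⁻¹)) R := by
        have := hasDerivAt_pd (G := fun r θ => (a r θ)⁻¹) hb R θ
        rwa [hpdb θ] at this
      have hprod := (hasDerivAt_pd hf R θ).mul hbθ
      have h2 := (hasDerivAt_pd (G := fun r θ => f r θ * (a r θ)⁻¹) hg R θ).unique hprod
      rw [h2, (hasDerivAt_pd hf R θ).deriv]
      ring
    rwa [heq] at h
  -- compute the derivative of the averaged quantity
  set J : ℝ := ∫ θ in (0:ℝ)..(2 * π), f R θ * (a R θ)⁻¹ with hJ
  have hD : HasDerivAt (fun r => (P r)⁻¹ * ∫ θ in (0:ℝ)..(2 * π), f r θ * (a r θ)⁻¹)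
      (-(c * S) / (P R) ^ 2 * J + (P R)⁻¹ * (FrI + c * Q)) R :=
    (hPder.inv hPne).mul hIder
  rw [hD.deriv]
  -- the commutator equals c * P⁻² * (P Q − S J)
  have hcomm : -(c * S) / (P R) ^ 2 * J + (P R)⁻¹ * (FrI + c * Q) - (P R)⁻¹ * FrI
      = c * ((P R)⁻¹ * (P R)⁻¹ * (P R * Q - S * J)) := by
    field_simp
    ring
  rw [hcomm]
  -- key identity
  have hkey : P R * Q - S * J
      = ∫ θ in (0:ℝ)..(2 * π),
          f R θ * (a R θ)⁻¹ * (P R * Real.exp (2 * η R θ) - S) := by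
    have hpt : ∀ θ ∈ Set.uIcc (0:ℝ) (2 * π),
        f R θ * (a R θ)⁻¹ * (P R * Real.exp (2 * η R θ) - S)
          = P R * (f R θ * (Real.exp (2 * η R θ) * (a R θ)⁻¹)) - S * (f R θ * (a R θ)⁻¹) := by
      intro θ _; ring
    rw [intervalIntegral.integral_congr hpt,
      intervalIntegral.integral_sub
        ((continuous_const.fun_mul (cF.fun_mul (cE.fun_mul cw))).intervalIntegrable _ _)
        ((continuous_const.fun_mul (cF.fun_mul cw)).intervalIntegrable _ _),
      intervalIntegral.integral_const_mul, intervalIntegral.integral_const_mul, hQ, hJ]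
  set M : ℝ := ∫ θ in (0:ℝ)..(2 * π), |deriv (fun t => Real.exp (2 * η R t)) θ| with hM
  have hM0 : 0 ≤ M := intervalIntegral.integral_nonneg h2π.le fun _ _ => abs_nonneg _
  -- pointwise bound on P E θ − S
  have hPES : ∀ θ ∈ Set.Icc (0:ℝ) (2 * π),
      |P R * Real.exp (2 * η R θ) - S| ≤ M * P R := by
    intro θ hθ
    have hrepr : P R * Real.exp (2 * η R θ) - S
        = ∫ s in (0:ℝ)..(2 * π),
            (Real.exp (2 * η R θ) - Real.exp (2 * η R s)) * (a R s)⁻¹ := by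
      have hpt : ∀ s ∈ Set.uIcc (0:ℝ) (2 * π),
          (Real.exp (2 * η R θ) - Real.exp (2 * η R s)) * (a R s)⁻¹
            = Real.exp (2 * η R θ) * (a R s)⁻¹ - Real.exp (2 * η R s) * (a R s)⁻¹ := by
        intro s _; ring
      rw [intervalIntegral.integral_congr hpt,
        intervalIntegral.integral_sub ((continuous_const.fun_mul cw).intervalIntegrable _ _)
          ((cE.fun_mul cw).intervalIntegrable _ _),
        intervalIntegral.integral_const_mul, ← hPdef, hS, mul_comm (Real.exp (2 * η R θ))]
    rw [hrepr]
    calc |∫ s in (0:ℝ)..(2 * π),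
          (Real.exp (2 * η R θ) - Real.exp (2 * η R s)) * (a R s)⁻¹|
        ≤ ∫ s in (0:ℝ)..(2 * π),
          |(Real.exp (2 * η R θ) - Real.exp (2 * η R s)) * (a R s)⁻¹| :=
          intervalIntegral.abs_integral_le_integral_abs h2π.le
      _ ≤ ∫ s in (0:ℝ)..(2 * π), M * (a R s)⁻¹ := by
          refine intervalIntegral.integral_mono_on h2π.le
            (((continuous_const.sub cE).mul cw).abs.intervalIntegrable _ _)
            ((continuous_const.mul cw).intervalIntegrable _ _) ?_
          intro s hs
          rw [abs_mul, abs_of_nonneg (hw0 s)]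
          exact mul_le_mul_of_nonneg_right (osc_bound hEc hs hθ) (hw0 s)
      _ = M * P R := by
          rw [intervalIntegral.integral_const_mul, hPdef]
  -- bound the key integral
  set A : ℝ := ∫ θ in (0:ℝ)..(2 * π), |f R θ| * (a R θ)⁻¹ with hA
  have hA0 : 0 ≤ A :=
    intervalIntegral.integral_nonneg h2π.le fun θ _ => mul_nonneg (abs_nonneg _) (hw0 θ)
  have hQSJ : |P R * Q - S * J| ≤ M * P R * A := by
    rw [hkey]
    calc |∫ θ in (0:ℝ)..(2 * π),
          f R θ * (a R θ)⁻¹ * (P R * Real.exp (2 * η R θ) - S)|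
        ≤ ∫ θ in (0:ℝ)..(2 * π),
          |f R θ * (a R θ)⁻¹ * (P R * Real.exp (2 * η R θ) - S)| :=
          intervalIntegral.abs_integral_le_integral_abs h2π.le
      _ ≤ ∫ θ in (0:ℝ)..(2 * π), |f R θ| * (a R θ)⁻¹ * (M * P R) := by
          refine intervalIntegral.integral_mono_on h2π.le
            (((cF.mul cw).mul ((continuous_const.mul cE).sub continuous_const)).abs.intervalIntegrable _ _)
            (((cF.abs.mul cw).mul continuous_const).intervalIntegrable _ _) ?_
          intro θ hθ
          rw [abs_mul, abs_mul, abs_of_nonneg (hw0 θ)]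
          exact mul_le_mul_of_nonneg_left (hPES θ hθ)
            (mul_nonneg (abs_nonneg _) (hw0 θ))
      _ = M * P R * A := by
          rw [intervalIntegral.integral_mul_const, hA, mul_comm]
  -- final arithmetic
  have hstep : |c * ((P R)⁻¹ * (P R)⁻¹ * (P R * Q - S * J))|
      ≤ c * ((P R)⁻¹ * A) * M := by
    rw [abs_mul, abs_mul, abs_of_nonneg hc0,
      abs_of_nonneg (mul_nonneg (inv_nonneg.2 hP0.le) (inv_nonneg.2 hP0.le))]
    have h1 : c * ((P R)⁻¹ * ((P R)⁻¹ * |P R * Q - S * J|))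
        ≤ c * ((P R)⁻¹ * ((P R)⁻¹ * (M * P R * A))) := by
      gcongr
    calc c * ((P R)⁻¹ * (P R)⁻¹ * |P R * Q - S * J|)
        = c * ((P R)⁻¹ * ((P R)⁻¹ * |P R * Q - S * J|)) := by ring
      _ ≤ c * ((P R)⁻¹ * ((P R)⁻¹ * (M * P R * A))) := h1
      _ = c * ((P R)⁻¹ * A) * M := by field_simp
  refine hstep.trans ?_
  have hcle : c ≤ π * K ^ 2 / R ^ 3 := by
    rw [hc, div_le_div_iff₀ (by positivity) hR3]
    nlinarith [Real.pi_gt_three, mul_nonneg (sq_nonneg K) hR3.le]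
  have havg0 : 0 ≤ (P R)⁻¹ * A := mul_nonneg (inv_nonneg.2 hP0.le) hA0
  calc c * ((P R)⁻¹ * A) * M ≤ (π * K ^ 2 / R ^ 3) * ((P R)⁻¹ * A) * M := by
        exact mul_le_mul_of_nonneg_right (mul_le_mul_of_nonneg_right hcle havg0) hM0
    _ = _ := by rw [hA, hM]
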